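/- Let n ≥ 1 and let g : ℝⁿ → ℝ be measurable, spherically symmetric (g(x) = g(y) whenever ‖x‖ = ‖y‖) and strictly radially increasing (g(x) < g(y) whenever ‖x‖ < ‖y‖). Let A ⊆ ℝⁿ be measurable with 0 < μ(A) < ∞ and g integrable on A, and let B be the open ball centred at the origin with μ(B) = μ(A). If μ(A Δ B) > 0 (A is not almost everywhere equal to B), then ∫_A g(x) dx > ∫_B g(x) dx. -/

import Mathlib

open MeasureTheory ENNReal

/-- For a spherically symmetric, strictly radially increasing `g` on
`ℝⁿ`, a measurable set `A` with `0 < μ(A) < ∞` on which `g` is integrable, and the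
open ball `B` centred at `0` with `μ(B) = μ(A)`, if `μ(A Δ B) > 0` then
`∫_A g > ∫_B g`. -/
theorem stmt_12 (n : ℕ) (hn : 1 ≤ n) (g : EuclideanSpace ℝ (Fin n) → ℝ)
    (hgmeas : Measurable g)
    (hgsymm : ∀ x y : EuclideanSpace ℝ (Fin n), ‖x‖ = ‖y‖ → g x = g y)
    (hgmono : ∀ x y : EuclideanSpace ℝ (Fin n), ‖x‖ < ‖y‖ → g x < g y)
    (A : Set (EuclideanSpace ℝ (Fin n))) (hA : MeasurableSet A)
    (hApos : 0 < volume A) (hAfin : volume A < ⊤)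
    (hint : IntegrableOn g A)
    (r : ℝ)
    (hvol : volume (Metric.ball (0 : EuclideanSpace ℝ (Fin n)) r) = volume A)
    (hdiff : 0 < volume (symmDiff A (Metric.ball (0 : EuclideanSpace ℝ (Fin n)) r))) :
    (∫ x in Metric.ball (0 : EuclideanSpace ℝ (Fin n)) r, g x) < ∫ x in A, g x := by
  set B := Metric.ball (0 : EuclideanSpace ℝ (Fin n)) r with hB
  have hBmeas : MeasurableSet B := Metric.isOpen_ball.measurableSet
  -- monotonicity for ≤
  have hmono' : ∀ x y : EuclideanSpace ℝ (Fin n), ‖x‖ ≤ ‖y‖ → g x ≤ g y := by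
    intro x y h
    rcases h.lt_or_eq with h | h
    · exact (hgmono x y h).le
    · exact (hgsymm x y h).le
  -- r > 0
  have hr : 0 < r := by
    by_contra h
    push_neg at h
    have hBe : B = ∅ := by rw [hB]; exact Metric.ball_eq_empty.2 h
    rw [hBe, measure_empty] at hvol
    exact hApos.ne' hvol.symm
  -- a point of norm r
  set x₀ : EuclideanSpace ℝ (Fin n) := r • (EuclideanSpace.single (⟨0, hn⟩ : Fin n) (1:ℝ)) with hx₀
  have hx₀norm : ‖x₀‖ = r := by
    rw [hx₀, norm_smul, EuclideanSpace.norm_single]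
    simp [abs_of_pos hr]
  set c : ℝ := g x₀ with hc
  -- pointwise bounds
  have hBA : ∀ x ∈ B \ A, g x < c := by
    intro x hx
    apply hgmono
    rw [hx₀norm]
    have hxB := hx.1
    rw [hB, Metric.mem_ball, dist_zero_right] at hxB
    exact hxB
  have hAB : ∀ x ∈ A \ B, c ≤ g x := by
    intro x hx
    apply hmono'
    rw [hx₀norm]
    have := hx.2
    simp only [hB, Metric.mem_ball, dist_zero_right, not_lt] at this
    simpa using this
  have hB0 : ∀ x ∈ B, g 0 ≤ g x := by
    intro x _
    exact hmono' 0 x (by simp)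
  have hBc : ∀ x ∈ B, g x ≤ c := by
    intro x hx
    apply hmono'
    rw [hx₀norm]
    simpa using (Metric.mem_ball.1 hx).le
  -- g integrable on B
  have hBfin : volume B ≠ ⊤ := by rw [hvol]; exact hAfin.ne
  have hintB : IntegrableOn g B := by
    apply Measure.integrableOn_of_bounded hBfin (hgmeas.aestronglyMeasurable)
      (M := max |g 0| |c|)
    filter_upwards [ae_restrict_mem hBmeas] with x hx
    rw [Real.norm_eq_abs, abs_le]
    constructor
    · calc -(max |g 0| |c|) ≤ -|g 0| := by simp
        _ ≤ g 0 := neg_abs_le _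
        _ ≤ g x := hB0 x hx
    · calc g x ≤ c := hBc x hx
        _ ≤ |c| := le_abs_self c
        _ ≤ _ := le_max_right _ _
  -- measures of the two differences are equal and positive
  have hABfin : volume (A \ B) ≠ ⊤ := (lt_of_le_of_lt (measure_mono Set.diff_subset) hAfin).ne
  have hBAfin : volume (B \ A) ≠ ⊤ := by
    refine (lt_of_le_of_lt (measure_mono Set.diff_subset) ?_).ne
    rw [hvol]; exact hAfin
  have hinterfin : volume (A ∩ B) ≠ ⊤ :=
    (lt_of_le_of_lt (measure_mono Set.inter_subset_left) hAfin).ne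
  have hmeq : volume (A \ B) = volume (B \ A) := by
    have h1 : volume (A ∩ B) + volume (A \ B) = volume A := measure_inter_add_diff A hBmeas
    have h2 : volume (B ∩ A) + volume (B \ A) = volume B := measure_inter_add_diff B hA
    rw [Set.inter_comm] at h2
    rw [hvol, ← h1] at h2
    exact (ENNReal.add_right_inj hinterfin).mp h2.symm |>.symm ▸ rfl
  have hmpos : 0 < volume (B \ A) := by
    by_contra h
    push_neg at h
    have h0 : volume (B \ A) = 0 := le_antisymm h zero_le
    have h0' : volume (A \ B) = 0 := by rw [hmeq, h0]
    have : volume (symmDiff A B) = 0 := by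
      rw [Set.symmDiff_def]
      exact le_antisymm ((measure_union_le _ _).trans (by rw [h0', h0]; simp)) zero_le
    rw [this] at hdiff
    exact lt_irrefl 0 hdiff
  -- integrability pieces
  have hintAB : IntegrableOn g (A \ B) := hint.mono_set Set.diff_subset
  have hintBA : IntegrableOn g (B \ A) := hintB.mono_set Set.diff_subset
  have hintAi : IntegrableOn g (A ∩ B) := hint.mono_set Set.inter_subset_left
  -- split
  have hsplitA : (∫ x in A ∩ B, g x) + ∫ x in A \ B, g x = ∫ x in A, g x :=
    integral_inter_add_diff hBmeas hint
  have hsplitB : (∫ x in B ∩ A, g x) + ∫ x in B \ A, g x = ∫ x in B, g x :=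
    integral_inter_add_diff hA hintB
  rw [Set.inter_comm] at hsplitB
  -- strict bound on B \ A
  have hconst_int : IntegrableOn (fun _ => c) (B \ A) :=
    integrableOn_const (lt_of_le_of_lt (measure_mono Set.diff_subset)
      (lt_of_le_of_lt hvol.le hAfin)).ne
  have hsub_int : IntegrableOn (fun x => c - g x) (B \ A) := hconst_int.sub hintBA
  have hBApos : (0:ℝ) < ∫ x in B \ A, (c - g x) := by
    rw [setIntegral_pos_iff_support_of_nonneg_ae]
    · refine lt_of_lt_of_le hmpos (measure_mono ?_)
      intro x hx
      refine ⟨?_, hx⟩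
      simp only [Function.mem_support]
      have := hBA x hx
      linarith
    · filter_upwards [ae_restrict_mem (hBmeas.diff hA)] with x hx
      have := hBA x hx
      simp; linarith
    · exact hsub_int
  have hBAlt : (∫ x in B \ A, g x) < (volume (B \ A)).toReal * c := by
    have h := integral_sub hconst_int hintBA
    rw [setIntegral_const, smul_eq_mul, measureReal_def] at h
    linarith [hBApos, h ▸ hBApos]
  have hconst_int2 : IntegrableOn (fun _ => c) (A \ B) :=
    integrableOn_const (lt_of_le_of_lt (measure_mono Set.diff_subset) hAfin).ne
  have hABge : (volume (A \ B)).toReal * c ≤ ∫ x in A \ B, g x := by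
    have := setIntegral_mono_on hconst_int2 hintAB (hA.diff hBmeas) hAB
    rwa [setIntegral_const, smul_eq_mul, measureReal_def] at this
  rw [← hsplitA, ← hsplitB]
  have : (volume (B \ A)).toReal * c = (volume (A \ B)).toReal * c := by rw [hmeq]
  linarith
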